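/- For every d ∈ D one has K ∩ W(d) = K ∩ U(d); moreover K = ⋂_{n≥0} cl(⋃{U(d) : d ∈ D_n}), i.e., in the defining intersection the balls U(d) may be used instead of the balls W(d). -/

import Mathlib

open Set Topology

/-- The Cantor space `2^ℕ`, with coordinates indexed by the positive integers. -/
abbrev Cant : Type := ℕ+ → Bool

/-- The support of a point of the Cantor space, as a set of (positive) natural numbers. -/
def ksupp (x : Cant) : Set ℕ := {i | ∃ h : 0 < i, x ⟨i, h⟩ = true}

/-- The plane. -/
abbrev Plane : Type := EuclideanSpace ℝ (Fin 2)

/-- `N_d = max supp d` (with `sSup ∅ = 0` for the zero point). -/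
noncomputable def Nd (d : Cant) : ℕ := sSup (ksupp d)

/-- The basic clopen set `V_d = {y : y(i) = d(i) for 1 ≤ i ≤ N_d}`. -/
noncomputable def Vd (d : Cant) : Set Cant :=
  {y | ∀ i : ℕ+, (i : ℕ) ≤ Nd d → y i = d i}

/-- The set `D_d` of children of `d ∈ D`: the points of `D_{k_d+1}` agreeing with `d`
on the coordinates `1, …, N_d`. -/
noncomputable def Dch (d : Cant) : Set Cant :=
  {e | (ksupp e).Finite ∧ (ksupp e).ncard = (ksupp d).ncard + 1 ∧
    ∀ i : ℕ+, (i : ℕ) ≤ Nd d → e i = d i}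

/-- The ball `W(d) = B(σ(d), 2^{−ℓ(d)})`. -/
noncomputable def Wb (σ : Cant → Plane) (ℓ : Cant → ℕ) (d : Cant) : Set Plane :=
  Metric.ball (σ d) ((2 : ℝ) ^ (-(ℓ d : ℤ)))

/-- The ball `U(d) = B(σ(d), 2^{−ℓ(d)−1})`. -/
noncomputable def Ub (σ : Cant → Plane) (ℓ : Cant → ℕ) (d : Cant) : Set Plane :=
  Metric.ball (σ d) ((2 : ℝ) ^ (-(ℓ d : ℤ) - 1))

/-- The resulting Cantor set `K = ⋂_n cl (⋃ {W(d) : d ∈ D_n})`. -/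
noncomputable def Kset (σ : Cant → Plane) (ℓ : Cant → ℕ) : Set Plane :=
  ⋂ n : ℕ, closure (⋃ d ∈ {d : Cant | (ksupp d).Finite ∧ (ksupp d).ncard = n}, Wb σ ℓ d)

/-- The closed set `F(d) = cl U(d) \ ⋃_{e ∈ D_d} W(e)`. -/
noncomputable def Fd (σ : Cant → Plane) (ℓ : Cant → ℕ) (d : Cant) : Set Plane :=
  closure (Ub σ ℓ d) \ ⋃ e ∈ Dch d, Wb σ ℓ e

/-- The three conditions imposed on the maps `σ : D → ℝ²` and `ℓ : D → ω`:
(1) `⟨σ(e) : e ∈ D_d⟩` converges to `σ(d)` (in the sense that `σ(e)` is close to `σ(d)`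
    once the added support element `N_e` of the child `e` is large);
(2) `cl W(e) ⊆ U(d) \ {σ(d)}` whenever `e ∈ D_d`;
(3) `{cl W(d) : d ∈ D_n}` is pairwise disjoint for every `n`. -/
def CantorConds (σ : Cant → Plane) (ℓ : Cant → ℕ) : Prop :=
  (∀ d : Cant, (ksupp d).Finite → ∀ ε > (0 : ℝ), ∃ M : ℕ, ∀ e ∈ Dch d,
      M ≤ Nd e → dist (σ e) (σ d) < ε) ∧
  (∀ d : Cant, (ksupp d).Finite → ∀ e ∈ Dch d,
      closure (Wb σ ℓ e) ⊆ Ub σ ℓ d \ {σ d}) ∧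
  (∀ n : ℕ, ∀ d e : Cant, (ksupp d).Finite → (ksupp d).ncard = n →
      (ksupp e).Finite → (ksupp e).ncard = n → d ≠ e →
      Disjoint (closure (Wb σ ℓ d)) (closure (Wb σ ℓ e)))

lemma mem_ksupp_iff (x : Cant) (i : ℕ+) : (i : ℕ) ∈ ksupp x ↔ x i = true := by
  constructor
  · rintro ⟨h, hx⟩; exact hx
  · intro h; exact ⟨i.pos, h⟩

lemma pos_of_mem_ksupp {x : Cant} {i : ℕ} (h : i ∈ ksupp x) : 0 < i := h.1

lemma le_Nd {x : Cant} (hx : (ksupp x).Finite) {i : ℕ} (hi : i ∈ ksupp x) : i ≤ Nd x :=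
  le_csSup hx.bddAbove hi

lemma Nd_mem {x : Cant} (hx : (ksupp x).Finite) (hne : (ksupp x).Nonempty) :
    Nd x ∈ ksupp x :=
  Nat.sSup_mem hne hx.bddAbove

lemma eq_of_ksupp_eq {x y : Cant} (h : ksupp x = ksupp y) : x = y := by
  funext i
  have h1 := mem_ksupp_iff x i
  have h2 := mem_ksupp_iff y i
  rw [h] at h1
  cases hx : x i <;> cases hy : y i
  · rfl
  · exact absurd (h1.mp (h2.mpr hy)) (by simp [hx])
  · exact absurd (h2.mp (h1.mpr hx)) (by simp [hy])
  · rfl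

lemma exists_parent (e : Cant) (he : (ksupp e).Finite) (n : ℕ)
    (hn : (ksupp e).ncard = n + 1) :
    ∃ d : Cant, (ksupp d).Finite ∧ (ksupp d).ncard = n ∧ e ∈ Dch d := by
  have hne : (ksupp e).Nonempty := by
    rcases (ksupp e).eq_empty_or_nonempty with h | h
    · simp [h, Set.ncard_empty] at hn
    · exact h
  set m := Nd e with hm
  have hmmem : m ∈ ksupp e := Nd_mem he hne
  set d : Cant := fun i => if (i : ℕ) = m then false else e i with hd
  have hks : ksupp d = ksupp e \ {m} := by
    ext i
    simp only [ksupp, hd, Set.mem_setOf_eq, Set.mem_diff, Set.mem_singleton_iff]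
    constructor
    · rintro ⟨h, hx⟩
      by_cases him : i = m
      · simp [him] at hx
      · exact ⟨⟨h, by simpa [him] using hx⟩, him⟩
    · rintro ⟨⟨h, hx⟩, him⟩
      exact ⟨h, by simpa [him] using hx⟩
  have hdfin : (ksupp d).Finite := hks ▸ (he.diff : (ksupp e \ {m}).Finite)
  have hdcard : (ksupp d).ncard = n := by
    rw [hks, Set.ncard_diff_singleton_of_mem hmmem, hn]; omega
  have hNdlt : Nd d < m := by
    rcases (ksupp d).eq_empty_or_nonempty with h0 | h0
    · have h1 : Nd d = 0 := by simp [Nd, h0]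
      have h2 : 0 < m := pos_of_mem_ksupp hmmem
      omega
    · have h1 : Nd d ∈ ksupp d := Nd_mem hdfin h0
      have h2 : Nd d ≤ m := le_Nd he (hks ▸ h1).1
      have h3 : Nd d ≠ m := (hks ▸ h1).2
      omega
  refine ⟨d, hdfin, hdcard, he, by rw [hdcard, hn], ?_⟩
  intro i hi
  have : (i : ℕ) ≠ m := by omega
  simp [hd, this]

lemma child_struct {d e : Cant} (hd : (ksupp d).Finite) (he : e ∈ Dch d) :
    ksupp e = ksupp d ∪ {Nd e} ∧ Nd d < Nd e := by
  obtain ⟨hef, hcard, hagree⟩ := he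
  have hsub : ksupp d ⊆ ksupp e := by
    rintro i ⟨h, hx⟩
    have hle : i ≤ Nd d := le_Nd hd ⟨h, hx⟩
    exact ⟨h, by rw [hagree ⟨i, h⟩ hle]; exact hx⟩
  have hdiff : (ksupp e \ ksupp d).ncard = 1 := by
    rw [Set.ncard_diff hsub (hef.subset hsub), hcard]; omega
  obtain ⟨m, hm⟩ := Set.ncard_eq_one.mp hdiff
  have hmmem : m ∈ ksupp e := (hm ▸ (Set.mem_singleton m)).1
  have hmnot : m ∉ ksupp d := (hm ▸ (Set.mem_singleton m)).2
  have hmgt : Nd d < m := by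
    by_contra hcon
    push_neg at hcon
    have hpos : 0 < m := pos_of_mem_ksupp hmmem
    have := hagree ⟨m, hpos⟩ hcon
    exact hmnot ⟨hpos, by rw [← this]; exact hmmem.2⟩
  have hksupp : ksupp e = ksupp d ∪ {m} := by
    rw [← hm, Set.union_diff_cancel hsub]
  have hNde : Nd e = m := by
    refine le_antisymm (csSup_le ⟨m, hmmem⟩ ?_) (le_csSup hef.bddAbove hmmem)
    intro i hi
    rw [hksupp] at hi
    rcases hi with hi | hi
    · exact le_of_lt (lt_of_le_of_lt (le_Nd hd hi) hmgt)
    · exact le_of_eq hi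
  rw [hNde]
  exact ⟨hksupp, hmgt⟩

lemma Ub_subset_Wb (σ : Cant → Plane) (ℓ : Cant → ℕ) (d : Cant) :
    Ub σ ℓ d ⊆ Wb σ ℓ d :=
  Metric.ball_subset_ball (zpow_le_zpow_right₀ one_le_two (by omega))

/-- For every `d ∈ D` one has `K ∩ W(d) = K ∩ U(d)`, and in the intersection defining `K`
the balls `U(d)` may be used instead of the balls `W(d)`. -/
theorem Kset_inter_Wb_eq_inter_Ub (σ : Cant → Plane) (ℓ : Cant → ℕ)
    (hc : CantorConds σ ℓ) :
    (∀ d : Cant, (ksupp d).Finite → Kset σ ℓ ∩ Wb σ ℓ d = Kset σ ℓ ∩ Ub σ ℓ d) ∧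
      Kset σ ℓ =
        ⋂ n : ℕ, closure (⋃ d ∈ {d : Cant | (ksupp d).Finite ∧ (ksupp d).ncard = n},
          Ub σ ℓ d) := by
  obtain ⟨hc1, hc2, hc3⟩ := hc
  -- level-shift inclusion
  have hshift : ∀ n : ℕ,
      (⋃ e ∈ {e : Cant | (ksupp e).Finite ∧ (ksupp e).ncard = n + 1}, Wb σ ℓ e) ⊆
      ⋃ d ∈ {d : Cant | (ksupp d).Finite ∧ (ksupp d).ncard = n}, Ub σ ℓ d := by
    intro n y hy
    rw [Set.mem_iUnion₂] at hy
    obtain ⟨e, ⟨hef, hen⟩, hye⟩ := hy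
    obtain ⟨d, hdf, hdn, hed⟩ := exists_parent e hef n hen
    rw [Set.mem_iUnion₂]
    exact ⟨d, ⟨hdf, hdn⟩, ((hc2 d hdf e hed) (subset_closure hye)).1⟩
  constructor
  · intro d hd
    apply Set.Subset.antisymm
    · rintro x ⟨hxK, hxW⟩
      refine ⟨hxK, ?_⟩
      set n := (ksupp d).ncard with hn
      have h1 : x ∈ closure (⋃ e ∈ {e : Cant | (ksupp e).Finite ∧ (ksupp e).ncard = n + 1},
          Wb σ ℓ e) := by
        have := Set.mem_iInter.mp hxK (n + 1)
        exact this
      have h2 : x ∈ closure (Wb σ ℓ d ∩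
          ⋃ e ∈ {e : Cant | (ksupp e).Finite ∧ (ksupp e).ncard = n + 1}, Wb σ ℓ e) :=
        Metric.isOpen_ball.inter_closure ⟨hxW, h1⟩
      have h3 : Wb σ ℓ d ∩
          (⋃ e ∈ {e : Cant | (ksupp e).Finite ∧ (ksupp e).ncard = n + 1}, Wb σ ℓ e) ⊆
          ⋃ e ∈ Dch d, Wb σ ℓ e := by
        rintro y ⟨hyd, hye⟩
        rw [Set.mem_iUnion₂] at hye
        obtain ⟨e, ⟨hef, hen⟩, hyWe⟩ := hye
        obtain ⟨d', hd'f, hd'n, hed'⟩ := exists_parent e hef n hen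
        by_cases hdd : d' = d
        · subst hdd
          exact Set.mem_iUnion₂.mpr ⟨e, hed', hyWe⟩
        · exfalso
          have hy1 : y ∈ closure (Wb σ ℓ d') :=
            subset_closure (Ub_subset_Wb σ ℓ d' ((hc2 d' hd'f e hed' (subset_closure hyWe)).1))
          have hy2 : y ∈ closure (Wb σ ℓ d) := subset_closure hyd
          exact Set.disjoint_left.mp (hc3 n d' d hd'f hd'n hd hn.symm hdd) hy1 hy2
      have h4 : x ∈ closure (⋃ e ∈ Dch d, Wb σ ℓ e) :=
        closure_mono h3 h2
      by_cases hxσ : x = σ d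
      · subst hxσ
        exact Metric.mem_ball_self (by positivity)
      · set δ := dist x (σ d) with hδ
        have hδpos : 0 < δ := dist_pos.mpr hxσ
        obtain ⟨M, hM⟩ := hc1 d hd (δ / 4) (by linarith)
        set S := {e | e ∈ Dch d ∧ Nd e < M} with hS
        have hSfin : S.Finite := by
          have himg : (Nd '' S).Finite := (Set.finite_Iio M).subset (by
            rintro _ ⟨e, ⟨_, hlt⟩, rfl⟩; exact hlt)
          refine Set.Finite.of_finite_image himg ?_
          rintro e1 ⟨he1, _⟩ e2 ⟨he2, _⟩ hNd
          apply eq_of_ksupp_eq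
          rw [(child_struct hd he1).1, (child_struct hd he2).1, hNd]
        have hcover : (⋃ e ∈ Dch d, Wb σ ℓ e) ⊆
            (⋃ e ∈ S, Wb σ ℓ e) ∪ Metric.closedBall (σ d) (δ / 2) := by
          intro y hy
          rw [Set.mem_iUnion₂] at hy
          obtain ⟨e, he, hye⟩ := hy
          by_cases hlt : Nd e < M
          · exact Or.inl (Set.mem_iUnion₂.mpr ⟨e, ⟨he, hlt⟩, hye⟩)
          · right
            have hdist : dist (σ e) (σ d) < δ / 4 := hM e he (by omega)
            have hσd : σ d ∉ Wb σ ℓ e := by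
              intro hmem
              exact ((hc2 d hd e he) (subset_closure hmem)).2 rfl
            have hr : (2 : ℝ) ^ (-(ℓ e : ℤ)) ≤ dist (σ d) (σ e) := by
              by_contra hcon
              push_neg at hcon
              exact hσd (Metric.mem_ball.mpr hcon)
            rw [Metric.mem_closedBall]
            have h5 : dist y (σ d) ≤ dist y (σ e) + dist (σ e) (σ d) := dist_triangle _ _ _
            have h6 : dist y (σ e) < (2 : ℝ) ^ (-(ℓ e : ℤ)) := Metric.mem_ball.mp hye
            rw [dist_comm (σ d) (σ e)] at hr
            linarith
        have hclosed : IsClosed ((⋃ e ∈ S, closure (Wb σ ℓ e)) ∪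
            Metric.closedBall (σ d) (δ / 2)) :=
          (hSfin.isClosed_biUnion (fun _ _ => isClosed_closure)).union Metric.isClosed_closedBall
        have h7 : x ∈ (⋃ e ∈ S, closure (Wb σ ℓ e)) ∪ Metric.closedBall (σ d) (δ / 2) := by
          refine closure_minimal (hcover.trans ?_) hclosed h4
          apply Set.union_subset_union_left
          exact Set.iUnion₂_mono (fun e _ => subset_closure)
        rcases h7 with h7 | h7
        · rw [Set.mem_iUnion₂] at h7
          obtain ⟨e, he, hxe⟩ := h7
          exact ((hc2 d hd e he.1) hxe).1
        · rw [Metric.mem_closedBall] at h7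
          linarith
    · rintro x ⟨hxK, hxU⟩
      exact ⟨hxK, Ub_subset_Wb σ ℓ d hxU⟩
  · apply Set.Subset.antisymm
    · intro x hx
      rw [Set.mem_iInter]
      intro n
      exact closure_mono (hshift n) (Set.mem_iInter.mp hx (n + 1))
    · intro x hx
      rw [Kset, Set.mem_iInter]
      intro n
      exact closure_mono (Set.iUnion₂_mono (fun d _ => Ub_subset_Wb σ ℓ d))
        (Set.mem_iInter.mp hx n)
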